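/- For every s in the octahedron O there exists an invariant, ergodic Borel probability measure μ on Ω with mean current s(μ) = s. -/

import Mathlib

set_option linter.unusedSectionVars false
set_option maxHeartbeats 1000000


open MeasureTheory Filter

namespace Dimers

/-- Vertices of the grid graph on `ℤ³`. -/
abbrev V : Type := Fin 3 → ℤ

/-- The `i`-th standard unit vector of `ℤ³`. -/
def unitVec (i : Fin 3) : V := fun j => if j = i then 1 else 0

/-- Grid adjacency: two vertices are adjacent iff they differ by a standard unit vector. -/
def Adj (x y : V) : Prop := ∃ i : Fin 3, y = x + unitVec i ∨ x = y + unitVec i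

/-- A vertex is even if its coordinate sum is even. -/
def IsEven (x : V) : Prop := (x 0 + x 1 + x 2) % 2 = 0

instance : DecidablePred IsEven := fun x =>
  inferInstanceAs (Decidable ((x 0 + x 1 + x 2) % 2 = 0))

/-- A dimer tiling (perfect matching) of `ℤ³`, encoded by the involution sending each vertex
to the vertex it is matched with. -/
def IsTiling (m : V → V) : Prop := (∀ x, Adj x (m x)) ∧ ∀ x, m (m x) = x

/-- `Omega` is the space of dimer tilings of `ℤ³`. -/
abbrev Omega : Type := {m : V → V // IsTiling m}

theorem isTiling_translate {m : V → V} (h : IsTiling m) (v : V) :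
    IsTiling fun x => m (x - v) + v := by
  obtain ⟨h1, h2⟩ := h
  constructor
  · intro x
    show Adj x (m (x - v) + v)
    obtain ⟨i, hi | hi⟩ := h1 (x - v)
    · exact ⟨i, Or.inl (by rw [hi]; abel)⟩
    · refine ⟨i, Or.inr ?_⟩
      rw [sub_eq_iff_eq_add] at hi
      exact hi.trans (by abel)
  · intro x
    show m (m (x - v) + v - v) + v = x
    have h3 : m (x - v) + v - v = m (x - v) := by abel
    rw [h3, h2]
    abel

/-- Translation of a tiling by the vector `v`. -/
def translate (v : V) (τ : Omega) : Omega :=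
  ⟨fun x => τ.1 (x - v) + v, isTiling_translate τ.2 v⟩

/-- A measure on `Omega` is invariant if it is preserved by translation by every even vector. -/
def Invariant (μ : Measure Omega) : Prop :=
  ∀ v : V, IsEven v → Measure.map (translate v) μ = μ

/-- An invariant measure is ergodic if every Borel set invariant under all even translations
has measure `0` or `1`. -/
def IsErgodicMeasure (μ : Measure Omega) : Prop :=
  Invariant μ ∧ ∀ A : Set Omega, MeasurableSet A →
    (∀ v : V, IsEven v → translate v ⁻¹' A = A) → μ A = 0 ∨ μ A = 1

/-- The mean current of a measure on `Omega`: the `i`-th coordinate is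
`μ{τ : e_i ∈ τ} − μ{τ : −e_i ∈ τ}`. -/
noncomputable def meanCurrent (μ : Measure Omega) : Fin 3 → ℝ := fun i =>
  (μ {τ : Omega | τ.1 0 = unitVec i}).toReal - (μ {τ : Omega | τ.1 0 = -unitVec i}).toReal

/-- The mean-current octahedron `O`. -/
def Oct : Set (Fin 3 → ℝ) := {s | |s 0| + |s 1| + |s 2| ≤ 1}

/-- The Shannon entropy `H_Λ(μ)` of the restriction of `μ` to the finite window `Λ`
(the restriction of a tiling to `Λ` records the partner of every vertex of `Λ`, i.e. all
edges with at least one endpoint in `Λ`). -/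
noncomputable def boxEntropy (Λ : Finset V) (μ : Measure Omega) : ℝ :=
  ∑' σ : (↥Λ → V), Real.negMulLog (μ {τ : Omega | ∀ x : ↥Λ, τ.1 x.1 = σ x}).toReal

/-- The cube `Λ_n = ([-n,n] ∩ ℤ)³`. -/
noncomputable def cube (n : ℕ) : Finset V := Fintype.piFinset fun _ : Fin 3 => Finset.Icc (-(n : ℤ)) (n : ℤ)

/-- The specific entropy (entropy per site) of a measure on `Omega`. -/
noncomputable def specificEntropy (μ : Measure Omega) : ℝ :=
  limsup (fun n : ℕ => boxEntropy (cube n) μ / ((cube n).card : ℝ)) atTop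

/-- The mean-current entropy function `ent`. -/
noncomputable def ent (s : Fin 3 → ℝ) : ℝ :=
  sSup {h : ℝ | ∃ μ : Measure Omega, IsProbabilityMeasure μ ∧ Invariant μ ∧
    meanCurrent μ = s ∧ specificEntropy μ = h}

/-- The uniform Gibbs condition in the finite window `Λ`: any two boundary-compatible
configurations (tilings whose symmetric difference consists of edges with both endpoints
in `Λ`) give cylinder sets of equal measure. -/
def GibbsCond (μ : Measure Omega) (Λ : Finset V) : Prop :=
  ∀ τ τ' : Omega,
    (∀ x : V, τ.1 x ≠ τ'.1 x → x ∈ Λ ∧ τ.1 x ∈ Λ ∧ τ'.1 x ∈ Λ) →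
    μ {σ : Omega | ∀ x ∈ Λ, σ.1 x = τ.1 x} = μ {σ : Omega | ∀ x ∈ Λ, σ.1 x = τ'.1 x}

/-- A (uniform) Gibbs measure. -/
def IsGibbs (μ : Measure Omega) : Prop :=
  Invariant μ ∧ ∀ Λ : Finset V, GibbsCond μ Λ

/- ===================== auxiliary development ===================== -/

section Aux

open scoped Pointwise

noncomputable section

/-- the circle of circumference 1 -/
abbrev T1 : Type := UnitAddCircle

instance : MeasurableSingletonClass V := by
  constructor
  intro v
  have : ({v} : Set V) = ⋂ i, (fun x : V => x i) ⁻¹' {v i} := by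
    ext x
    simp only [Set.mem_singleton_iff, Set.mem_iInter, Set.mem_preimage, funext_iff]
  rw [this]
  exact MeasurableSet.iInter fun i => (measurable_pi_apply i) (measurableSet_singleton _)

lemma measurable_toV {α : Type*} [MeasurableSpace α] {β : Type*} [Countable β]
    [MeasurableSpace β] [MeasurableSingletonClass β] {γ : Type*} [MeasurableSpace γ]
    (g : α → β) (f : β → γ) (hg : Measurable g) : Measurable fun x => f (g x) :=
  (measurable_of_countable f).comp hg

/-! ### The rotation-ergodicity lemma -/

lemma rot_mp (z : T1) : MeasurePreserving (fun x => z + x) volume volume :=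
  measurePreserving_add_left volume z

lemma coe_one_T1 : ((1 : ℝ) : T1) = 0 := by
  exact_mod_cast AddCircle.coe_period (p := (1:ℝ))

lemma ergodic_irrational_rotation {r : ℝ} (hr : Irrational r) {S : Set T1}
    (hS : MeasurableSet S) (hinv : (fun x => (r : T1) + x) ⁻¹' S = S) :
    volume S = 0 ∨ volume S = 1 := by
  classical
  set A : Set T1 := {z | (fun x => z + x) ⁻¹' S =ᵐ[volume] S} with hA
  have hAclosed : IsClosed A := by
    set cm : C(T1 × T1, T1) := ⟨fun p => p.1 + p.2, continuous_add⟩ with hcm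
    have hcur : ∀ z : T1, ⇑((ContinuousMap.curry cm) z) = fun x => z + x := by
      intro z; funext x; rfl
    have h := MeasureTheory.isClosed_setOf_preimage_ae_eq (μ := (volume : Measure T1))
      (ν := (volume : Measure T1)) (ContinuousMap.curry cm).continuous
      (fun z => by rw [hcur z]; exact rot_mp z) S hS.nullMeasurableSet (measure_ne_top _ _)
    have : {z | ⇑((ContinuousMap.curry cm) z) ⁻¹' S =ᵐ[volume] S} = A := by
      ext z; rw [Set.mem_setOf_eq, hcur z]; rfl
    rwa [this] at h
  have hzero : (0 : T1) ∈ A := by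
    simp only [hA, Set.mem_setOf_eq]
    have : (fun x : T1 => (0:T1) + x) = id := by funext x; simp
    rw [this, Set.preimage_id]
    exact Filter.EventuallyEq.rfl
  have hadd : ∀ z₁ ∈ A, ∀ z₂ ∈ A, z₁ + z₂ ∈ A := by
    intro z₁ h₁ z₂ h₂
    simp only [hA, Set.mem_setOf_eq] at *
    have hcomp : (fun x : T1 => (z₁ + z₂) + x) = (fun x => z₂ + x) ∘ (fun x => z₁ + x) := by
      funext x; simp [add_assoc, add_comm, add_left_comm]
    rw [hcomp, Set.preimage_comp]
    exact ((rot_mp z₁).quasiMeasurePreserving.preimage_ae_eq h₂).trans h₁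
  have hneg : ∀ z ∈ A, -z ∈ A := by
    intro z hz
    simp only [hA, Set.mem_setOf_eq] at *
    have h2 : (fun x : T1 => -z + x) ⁻¹' ((fun x => z + x) ⁻¹' S)
        =ᵐ[volume] (fun x : T1 => -z + x) ⁻¹' S :=
      (rot_mp (-z)).quasiMeasurePreserving.preimage_ae_eq hz
    have h3 : (fun x : T1 => -z + x) ⁻¹' ((fun x => z + x) ⁻¹' S) = S := by
      rw [← Set.preimage_comp]
      have : (fun x : T1 => z + x) ∘ (fun x => -z + x) = id := by
        funext x; simp
      rw [this, Set.preimage_id]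
    rw [h3] at h2
    exact h2.symm
  have hr_mem : (r : T1) ∈ A := by
    have : (fun x => (r : T1) + x) ⁻¹' S =ᵐ[volume] S := by rw [hinv]; exact Filter.EventuallyEq.rfl
    exact this
  have coe_add : ∀ x y : ℝ, ((x + y : ℝ) : T1) = (x : T1) + (y : T1) := fun _ _ => rfl
  have coe_neg : ∀ x : ℝ, ((-x : ℝ) : T1) = -(x : T1) := fun _ => rfl
  set D' : AddSubgroup ℝ :=
    { carrier := {x : ℝ | ((x : ℝ) : T1) ∈ A}
      zero_mem' := by
        have : ((0 : ℝ) : T1) = 0 := rfl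
        simp only [Set.mem_setOf_eq, this]; exact hzero
      add_mem' := by
        intro x y hx hy
        simp only [Set.mem_setOf_eq] at *
        rw [coe_add]; exact hadd _ hx _ hy
      neg_mem' := by
        intro x hx
        simp only [Set.mem_setOf_eq] at *
        rw [coe_neg]; exact hneg _ hx } with hD'
  set D : AddSubgroup ℝ := AddSubgroup.closure ({r, 1} : Set ℝ) with hD
  have hDle : D ≤ D' := by
    rw [hD]
    apply (AddSubgroup.closure_le D').mpr
    rintro z (h | h)
    · rw [h]; exact hr_mem
    · rw [Set.mem_singleton_iff.mp h]
      show ((1:ℝ) : T1) ∈ A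
      rw [coe_one_T1]; exact hzero
  have hsub : ∀ y ∈ D, ((y : ℝ) : T1) ∈ A := fun y hy => hDle hy
  have hDdense : Dense (D : Set ℝ) := by
    rcases AddSubgroup.dense_or_cyclic D with h | ⟨g, hg⟩
    · exact h
    · exfalso
      have hrD : r ∈ D := AddSubgroup.subset_closure (by left; rfl)
      have h1D : (1:ℝ) ∈ D := AddSubgroup.subset_closure (by right; rfl)
      rw [hg] at hrD h1D
      obtain ⟨m, hm⟩ := AddSubgroup.mem_closure_singleton.mp hrD
      obtain ⟨n, hn⟩ := AddSubgroup.mem_closure_singleton.mp h1D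
      rw [zsmul_eq_mul] at hm hn
      have hn0 : (n : ℝ) ≠ 0 := by
        intro h0
        rw [h0, zero_mul] at hn
        exact one_ne_zero hn.symm
      refine hr ⟨(m : ℚ)/(n : ℚ), ?_⟩
      have hg0 : g = 1 / n := by field_simp at hn ⊢; linarith [hn]
      rw [← hm, hg0]
      push_cast
      field_simp
  have hAdense : Dense A := by
    have himg : Dense ((fun y : ℝ => (y : T1)) '' (D : Set ℝ)) := by
      refine DenseRange.dense_image ?_ ?_ hDdense
      · exact (QuotientAddGroup.mk_surjective).denseRange
      · exact AddCircle.continuous_mk' 1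
    exact himg.mono (by rintro z ⟨y, hy, rfl⟩; exact hsub y hy)
  have hAuniv : A = Set.univ := by
    have := hAdense.closure_eq
    rw [hAclosed.closure_eq] at this
    exact this
  have hvadd : ∀ n : ℕ, ((((1 : ℝ)/(n+1) : ℝ) : T1) +ᵥ S : Set T1) =ᵐ[volume] S := by
    intro n
    have hz' : (fun x => -(((1 : ℝ)/(n+1) : ℝ) : T1) + x) ⁻¹' S =ᵐ[volume] S := by
      have := hAuniv ▸ (Set.mem_univ (-(((1 : ℝ)/(n+1) : ℝ) : T1)))
      exact this
    have himg : ((((1 : ℝ)/(n+1) : ℝ) : T1) +ᵥ S : Set T1)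
        = (fun x => -(((1 : ℝ)/(n+1) : ℝ) : T1) + x) ⁻¹' S := by
      ext x
      simp only [Set.mem_preimage, Set.mem_vadd_set]
      constructor
      · rintro ⟨y, hy, rfl⟩
        simpa [vadd_eq_add] using hy
      · intro hx
        exact ⟨_, hx, by simp [vadd_eq_add]⟩
    rw [himg]
    exact hz'
  have horder : Filter.Tendsto (addOrderOf ∘ (fun n : ℕ => (((1 : ℝ)/(n+1) : ℝ) : T1)))
      Filter.atTop Filter.atTop := by
    have heq : (addOrderOf ∘ (fun n : ℕ => (((1 : ℝ)/(n+1) : ℝ) : T1))) = fun n => n + 1 := by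
      funext n
      simp only [Function.comp_apply]
      have h1 : ((1 : ℝ)/(n+1) : ℝ) = (1 : ℝ) / ((n+1 : ℕ) : ℝ) := by push_cast; ring
      rw [h1]
      exact AddCircle.addOrderOf_period_div (Nat.succ_pos n)
    rw [heq]
    exact tendsto_add_atTop_nat 1
  rcases AddCircle.ae_empty_or_univ_of_forall_vadd_ae_eq_self hS.nullMeasurableSet
      hvadd horder with h | h
  · left; rw [measure_congr h, measure_empty]
  · right; rw [measure_congr h]; exact UnitAddCircle.measure_univ

end

end Aux

section Core

variable (a : Fin 3 → ℤ) (F : T1 → Fin 3) (G : T1 → ZMod 2)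
  (alT : T1)

def wv (i : Fin 3) : V := fun j => if j = i then a i else 0
def ell (x : V) : ℤ := ∑ i, a i * x i
noncomputable def jf (θ : T1) (m : ℤ) : Fin 3 := F (θ + m • alT)
noncomputable def Wf (θ : T1) (n : ℤ) : V :=
  (∑ m ∈ Finset.range n.toNat, wv a (jf F alT θ (m : ℤ)))
    - ∑ m ∈ Finset.range (-n).toNat, wv a (jf F alT θ (-((m : ℤ) + 1)))
noncomputable def phi (θ : T1) (x : V) : ℤ :=
  a 0 * (x 0 - Wf a F alT θ (ell a x) 0)
noncomputable def Mmap (θ ψ : T1) (x : V) : V :=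
  if ((ell a x : ZMod 2) = G (ψ + (phi a F alT θ x) • alT)) then
    x + wv a (jf F alT θ (ell a x))
  else
    x - wv a (jf F alT θ (ell a x - 1))

variable {a}

section ellLemmas
variable (ha : ∀ i, a i = 1 ∨ a i = -1)
include ha
lemma a_sq (i : Fin 3) : a i * a i = 1 := by rcases ha i with h | h <;> simp [h]
lemma ell_add (x y : V) : ell a (x + y) = ell a x + ell a y := by
  simp [ell, mul_add, Finset.sum_add_distrib]
lemma ell_neg (x : V) : ell a (-x) = - ell a x := by
  simp [ell, Finset.sum_neg_distrib]
lemma ell_sub (x y : V) : ell a (x - y) = ell a x - ell a y := by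
  rw [sub_eq_add_neg, ell_add ha, ell_neg ha, sub_eq_add_neg]
lemma ell_wv (i : Fin 3) : ell a (wv a i) = 1 := by
  rw [ell, Finset.sum_eq_single i]
  · simp [wv, a_sq ha]
  · intro b _ hb; simp [wv, hb]
  · simp
lemma ell_add_wv (x : V) (i : Fin 3) : ell a (x + wv a i) = ell a x + 1 := by
  rw [ell_add ha, ell_wv ha]
lemma ell_sub_wv (x : V) (i : Fin 3) : ell a (x - wv a i) = ell a x - 1 := by
  rw [ell_sub ha, ell_wv ha]

lemma cast_a (i : Fin 3) : ((a i : ℤ) : ZMod 2) = 1 := by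
  rcases ha i with h | h <;> rw [h] <;> decide

lemma ell_even_cast {v : V} (hv : IsEven v) : ((ell a v : ℤ) : ZMod 2) = 0 := by
  have h1 : ((ell a v : ℤ) : ZMod 2) = ((v 0 + v 1 + v 2 : ℤ) : ZMod 2) := by
    rw [ell, Fin.sum_univ_three]
    push_cast
    rw [cast_a ha, cast_a ha, cast_a ha]
    ring
  rw [h1, ZMod.intCast_zmod_eq_zero_iff_dvd]
  exact Int.dvd_of_emod_eq_zero hv
end ellLemmas

lemma Wf_zero (θ : T1) : Wf a F alT θ 0 = 0 := by simp [Wf]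

lemma Wf_succ (θ : T1) (n : ℤ) :
    Wf a F alT θ (n + 1) = Wf a F alT θ n + wv a (jf F alT θ n) := by
  rcases le_or_gt 0 n with h | h
  · have h1 : (n + 1).toNat = n.toNat + 1 := by omega
    have h2 : (-n).toNat = 0 := by omega
    have h3 : (-(n + 1)).toNat = 0 := by omega
    have h4 : (n.toNat : ℤ) = n := by omega
    rw [Wf, Wf, h1, h2, h3, Finset.sum_range_succ, h4]
    abel
  · have h1 : (n + 1).toNat = 0 := by omega
    have h2 : n.toNat = 0 := by omega
    have h3 : (-n).toNat = (-(n+1)).toNat + 1 := by omega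
    have h4 : -((((-(n+1)).toNat : ℤ)) + 1) = n := by omega
    rw [Wf, Wf, h1, h2, h3, Finset.sum_range_succ, h4]
    abel

lemma Wf_pred (θ : T1) (n : ℤ) :
    Wf a F alT θ (n - 1) = Wf a F alT θ n - wv a (jf F alT θ (n - 1)) := by
  have := Wf_succ (a := a) F alT θ (n - 1)
  rw [sub_add_cancel] at this
  rw [this]; abel

lemma jf_shift (θ : T1) (t m : ℤ) :
    jf F alT (θ - t • alT) m = jf F alT θ (m - t) := by
  unfold jf
  congr 1
  rw [sub_zsmul]
  abel

lemma Wf_shift (θ : T1) (t n : ℤ) :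
    Wf a F alT (θ - t • alT) n = Wf a F alT θ (n - t) - Wf a F alT θ (-t) := by
  induction n using Int.induction_on with
  | zero => rw [Wf_zero, zero_sub, sub_self]
  | succ k ih =>
      rw [Wf_succ, ih, jf_shift]
      have : (k : ℤ) + 1 - t = (k - t) + 1 := by ring
      rw [this, Wf_succ]
      abel
  | pred k ih =>
      have e1 : (-(k:ℤ) - 1) = (-(k:ℤ)) - 1 := by ring
      rw [e1, Wf_pred, ih, jf_shift]
      have e2 : -(k:ℤ) - 1 - t = (-(k:ℤ) - t) - 1 := by ring
      rw [e2, Wf_pred]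
      abel

variable (ha : ∀ i, a i = 1 ∨ a i = -1)
include ha

lemma adj_add_wv (x : V) (i : Fin 3) : Adj x (x + wv a i) := by
  rcases ha i with h | h
  · exact ⟨i, Or.inl (by funext j; simp [wv, unitVec, h])⟩
  · refine ⟨i, Or.inr ?_⟩
    funext j
    simp only [Pi.add_apply, wv, unitVec, h]
    by_cases hj : j = i <;> simp [hj]

lemma adj_sub_wv (x : V) (i : Fin 3) : Adj x (x - wv a i) := by
  rcases ha i with h | h
  · refine ⟨i, Or.inr ?_⟩
    funext j
    simp only [Pi.add_apply, Pi.sub_apply, wv, unitVec, h]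
    by_cases hj : j = i <;> simp [hj]
  · refine ⟨i, Or.inl ?_⟩
    funext j
    simp only [Pi.add_apply, Pi.sub_apply, wv, unitVec, h]
    by_cases hj : j = i <;> simp [hj]

lemma zmod2_flip {u v : ZMod 2} (h : ¬ u = v) : u + 1 = v := by revert u v; decide
omit ha in
lemma zmod2_pred_of_ne {u v : ZMod 2} (h : ¬ u = v) : u - 1 = v := by revert u v; decide
omit ha in
lemma zmod2_ne_succ (u : ZMod 2) : ¬ (u + 1 = u) := by revert u; decide

theorem isTiling_Mmap (θ ψ : T1) : IsTiling (Mmap a F G alT θ ψ) := by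
  constructor
  · intro x
    unfold Mmap
    split
    · exact adj_add_wv ha x _
    · exact adj_sub_wv ha x _
  · intro x
    set n := ell a x with hn
    by_cases h : ((ell a x : ZMod 2) = G (ψ + (phi a F alT θ x) • alT))
    · -- up step
      have hstep : Mmap a F G alT θ ψ x = x + wv a (jf F alT θ n) := by
        rw [Mmap, if_pos h]
      rw [hstep]
      set y := x + wv a (jf F alT θ n) with hy
      have hey : ell a y = n + 1 := ell_add_wv ha x _
      have hphy : phi a F alT θ y = phi a F alT θ x := by
        unfold phi
        rw [hey, Wf_succ, ← hn]
        simp only [hy, Pi.add_apply, Pi.sub_apply]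
        ring
      have hc1 : ((n + 1 : ℤ) : ZMod 2) = ((n : ℤ) : ZMod 2) + 1 := by push_cast; ring
      have hcy : ¬ ((ell a y : ZMod 2) = G (ψ + (phi a F alT θ y) • alT)) := by
        rw [hey, hphy, hc1, ← hn] at *
        rw [← h]
        exact zmod2_ne_succ _
      rw [Mmap, if_neg hcy, hey]
      have : n + 1 - 1 = n := by ring
      rw [this, hy]
      abel
    · -- down step
      have hstep : Mmap a F G alT θ ψ x = x - wv a (jf F alT θ (n - 1)) := by
        rw [Mmap, if_neg h]
      rw [hstep]
      set y := x - wv a (jf F alT θ (n - 1)) with hy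
      have hey : ell a y = n - 1 := ell_sub_wv ha x _
      have hphy : phi a F alT θ y = phi a F alT θ x := by
        unfold phi
        rw [hey, Wf_pred, ← hn]
        simp only [hy, Pi.sub_apply]
        ring
      have hc1 : ((n - 1 : ℤ) : ZMod 2) = ((n : ℤ) : ZMod 2) - 1 := by push_cast; ring
      have hcy : ((ell a y : ZMod 2) = G (ψ + (phi a F alT θ y) • alT)) := by
        rw [hey, hphy, hc1]
        rw [← hn] at h
        exact zmod2_pred_of_ne h
      rw [Mmap, if_pos hcy, hey]
      have : n - 1 = n - 1 := rfl
      rw [hy]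
      abel

theorem Mmap_translate (θ ψ : T1) (v : V) (hv : IsEven v) (x : V) :
    Mmap a F G alT (θ - (ell a v) • alT)
        (ψ - (a 0 * (v 0 + Wf a F alT θ (-(ell a v)) 0)) • alT) x
      = Mmap a F G alT θ ψ (x - v) + v := by
  set t := ell a v with hT
  set δ := a 0 * (v 0 + Wf a F alT θ (-t) 0) with hδ
  have hexv : ell a (x - v) = ell a x - t := by rw [ell_sub ha, hT]
  have hphi : phi a F alT (θ - t • alT) x - δ = phi a F alT θ (x - v) := by
    unfold phi
    rw [Wf_shift, hexv, hδ]
    simp only [Pi.sub_apply]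
    ring
  have hGarg : ψ - δ • alT + (phi a F alT (θ - t • alT) x) • alT
      = ψ + (phi a F alT θ (x - v)) • alT := by
    rw [← hphi, sub_zsmul]
    abel
  have hpar : ((ell a x : ℤ) : ZMod 2) = ((ell a (x - v) : ℤ) : ZMod 2) := by
    rw [hexv]
    push_cast
    rw [ell_even_cast ha hv]
    ring
  have hcond : ((ell a x : ZMod 2) = G ((ψ - δ • alT) + (phi a F alT (θ - t • alT) x) • alT))
      ↔ ((ell a (x - v) : ZMod 2) = G (ψ + (phi a F alT θ (x - v)) • alT)) := by
    rw [hGarg, hpar]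
  by_cases h : ((ell a (x - v) : ZMod 2) = G (ψ + (phi a F alT θ (x - v)) • alT))
  · rw [Mmap, if_pos (hcond.mpr h), Mmap, if_pos h]
    rw [jf_shift, ← hexv]
    abel
  · rw [Mmap, if_neg (fun hc => h (hcond.mp hc)), Mmap, if_neg h]
    rw [jf_shift]
    have : ell a x - 1 - t = ell a (x - v) - 1 := by rw [hexv]; ring
    rw [this]
    abel

end Core

section Measures

noncomputable section

open MeasureTheory

/-- the rotation angle -/
def alS : T1 := ((Real.sqrt 2 : ℝ) : T1)

/-- the base measure -/
def PP : Measure (T1 × T1) := (volume : Measure T1).prod volume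

instance : IsProbabilityMeasure (volume : Measure T1) := ⟨UnitAddCircle.measure_univ⟩

instance : IsProbabilityMeasure PP := by unfold PP; infer_instance

variable {a : Fin 3 → ℤ} (F : T1 → Fin 3) (G : T1 → ZMod 2)

/-- the tiling-valued map -/
def PhiM (ha : ∀ i, a i = 1 ∨ a i = -1) : T1 × T1 → Omega :=
  fun b => ⟨Mmap a F G alS b.1 b.2, isTiling_Mmap F G alS ha b.1 b.2⟩

/-- the skew translation on the base -/
def PsiM (a : Fin 3 → ℤ) (v : V) : T1 × T1 → T1 × T1 :=
  fun b => (b.1 - (ell a v) • alS, b.2 - (a 0 * (v 0 + Wf a F alS b.1 (-(ell a v)) 0)) • alS)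

variable (hF : Measurable F) (hG : Measurable G)

lemma meas_zsmul_comp {α : Type*} [MeasurableSpace α] {f : α → ℤ} (hf : Measurable f) :
    Measurable fun x => (f x) • alS := by
  have : (fun x => (f x) • alS) = (fun k : ℤ => k • alS) ∘ f := rfl
  rw [this]
  exact (measurable_from_top).comp hf

lemma meas_rot (z : T1) : Measurable fun θ : T1 => θ + z :=
  (continuous_id.add continuous_const).measurable

lemma meas_rot' (z : T1) : Measurable fun θ : T1 => θ - z :=
  (continuous_id.sub continuous_const).measurable

include hF

lemma meas_jf (m : ℤ) : Measurable fun θ => jf F alS θ m :=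
  hF.comp (meas_rot _)

lemma meas_Wf (n : ℤ) : Measurable fun θ => Wf a F alS θ n := by
  apply measurable_pi_lambda
  intro j
  have h1 : Measurable fun θ =>
      (∑ m ∈ Finset.range n.toNat, wv a (jf F alS θ (m : ℤ))) j := by
    have : (fun θ => (∑ m ∈ Finset.range n.toNat, wv a (jf F alS θ (m : ℤ))) j)
        = fun θ => ∑ m ∈ Finset.range n.toNat, wv a (jf F alS θ (m : ℤ)) j := by
      funext θ; simp
    rw [this]
    exact Finset.measurable_sum _ fun m _ =>
      measurable_toV _ (fun i => wv a i j) (meas_jf F hF (m : ℤ))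
  have h2 : Measurable fun θ =>
      (∑ m ∈ Finset.range (-n).toNat, wv a (jf F alS θ (-((m : ℤ) + 1)))) j := by
    have : (fun θ => (∑ m ∈ Finset.range (-n).toNat, wv a (jf F alS θ (-((m : ℤ) + 1)))) j)
        = fun θ => ∑ m ∈ Finset.range (-n).toNat, wv a (jf F alS θ (-((m : ℤ) + 1))) j := by
      funext θ; simp
    rw [this]
    exact Finset.measurable_sum _ fun m _ =>
      measurable_toV _ (fun i => wv a i j) (meas_jf F hF _)
  have : (fun θ => Wf a F alS θ n j)
      = fun θ => (∑ m ∈ Finset.range n.toNat, wv a (jf F alS θ (m : ℤ))) j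
        - (∑ m ∈ Finset.range (-n).toNat, wv a (jf F alS θ (-((m : ℤ) + 1)))) j := by
    funext θ; rw [Wf]; simp
  rw [this]
  exact h1.sub h2

lemma meas_phi (x : V) : Measurable fun θ => phi a F alS θ x := by
  unfold phi
  have : Measurable fun θ => Wf a F alS θ (ell a x) 0 :=
    (measurable_pi_apply 0).comp (meas_Wf F hF _)
  exact (measurable_const.sub this).const_mul _

lemma meas_dltW (v : V) :
    Measurable fun θ => (a 0 * (v 0 + Wf a F alS θ (-(ell a v)) 0)) := by
  have : Measurable fun θ => Wf a F alS θ (-(ell a v)) 0 :=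
    (measurable_pi_apply 0).comp (meas_Wf F hF _)
  exact (measurable_const.add this).const_mul _

include hG

lemma meas_cond (x : V) :
    MeasurableSet {b : T1 × T1 |
      ((ell a x : ZMod 2) = G (b.2 + (phi a F alS b.1 x) • alS))} := by
  have hh : Measurable fun b : T1 × T1 => G (b.2 + (phi a F alS b.1 x) • alS) := by
    apply hG.comp
    exact measurable_snd.add ((meas_zsmul_comp ((meas_phi F hF x))).comp measurable_fst)
  have : {b : T1 × T1 | ((ell a x : ZMod 2) = G (b.2 + (phi a F alS b.1 x) • alS))}
      = (fun b : T1 × T1 => G (b.2 + (phi a F alS b.1 x) • alS)) ⁻¹' {(ell a x : ZMod 2)} := by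
    ext b; simp [eq_comm]
  rw [this]
  exact hh (measurableSet_singleton _)

lemma meas_Mmap (x : V) : Measurable fun b : T1 × T1 => Mmap a F G alS b.1 b.2 x := by
  unfold Mmap
  apply Measurable.ite (meas_cond F G hF hG x)
  · exact measurable_toV _ (fun i => x + wv a i) ((meas_jf F hF _).comp measurable_fst)
  · exact measurable_toV _ (fun i => x - wv a i) ((meas_jf F hF _).comp measurable_fst)

lemma meas_PhiM (ha : ∀ i, a i = 1 ∨ a i = -1) : Measurable (PhiM F G ha) := by
  apply Measurable.subtype_mk
  apply measurable_pi_lambda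
  intro x
  exact meas_Mmap F G hF hG x

omit hG

lemma mp_PsiM (v : V) : MeasurePreserving (PsiM F a v) PP PP := by
  have hf : MeasurePreserving (fun θ : T1 => θ - (ell a v) • alS) volume volume := by
    have : (fun θ : T1 => θ - (ell a v) • alS) = fun θ : T1 => θ + (-((ell a v) • alS)) := by
      funext θ; rw [sub_eq_add_neg]
    rw [this]
    exact measurePreserving_add_right volume _
  have hg : Measurable (Function.uncurry fun θ ψ : T1 =>
      ψ - (a 0 * (v 0 + Wf a F alS θ (-(ell a v)) 0)) • alS) := by
    have : (Function.uncurry fun θ ψ : T1 =>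
        ψ - (a 0 * (v 0 + Wf a F alS θ (-(ell a v)) 0)) • alS)
        = fun b : T1 × T1 => b.2 - (a 0 * (v 0 + Wf a F alS b.1 (-(ell a v)) 0)) • alS := rfl
    rw [this]
    exact measurable_snd.sub ((meas_zsmul_comp (meas_dltW F hF v)).comp measurable_fst)
  have hfib : ∀ᵐ θ : T1 ∂(volume : Measure T1),
      Measure.map (fun ψ : T1 => ψ - (a 0 * (v 0 + Wf a F alS θ (-(ell a v)) 0)) • alS)
        volume = volume := by
    filter_upwards with θ
    have : (fun ψ : T1 => ψ - (a 0 * (v 0 + Wf a F alS θ (-(ell a v)) 0)) • alS)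
        = fun ψ : T1 => ψ + (-((a 0 * (v 0 + Wf a F alS θ (-(ell a v)) 0)) • alS)) := by
      funext ψ; rw [sub_eq_add_neg]
    rw [this]
    exact (measurePreserving_add_right volume _).map_eq
  exact hf.skew_product hg hfib

omit hF in
lemma equiv_PhiM (ha : ∀ i, a i = 1 ∨ a i = -1) {v : V} (hv : IsEven v) :
    translate v ∘ (PhiM F G ha) = (PhiM F G ha) ∘ (PsiM F a v) := by
  funext b
  apply Subtype.ext
  funext x
  show (PhiM F G ha b).1 (x - v) + v = (PhiM F G ha (PsiM F a v b)).1 x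
  exact (Mmap_translate F G alS ha b.1 b.2 v hv x).symm

end

end Measures

section Arcs

noncomputable section

open MeasureTheory

def eIco : T1 → ℝ := fun θ => ((AddCircle.equivIco 1 0 θ : ℝ))

lemma meas_eIco : Measurable eIco :=
  measurable_subtype_coe.comp (AddCircle.measurableEquivIco 1 0).measurable

lemma eIco_coe (r : ℝ) : eIco ((r : ℝ) : T1) = Int.fract r := by
  rw [eIco]
  rw [AddCircle.coe_equivIco_mk_apply]
  simp

def Fc (c1 c2 : ℝ) : T1 → Fin 3 := fun θ =>
  if eIco θ < c1 then 0 else if eIco θ < c2 then 1 else 2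

def Gc (q : ℝ) : T1 → ZMod 2 := fun ψ => if eIco ψ < q then 0 else 1

lemma meas_Fc (c1 c2 : ℝ) : Measurable (Fc c1 c2) := by
  apply Measurable.ite (meas_eIco measurableSet_Iio) measurable_const
  exact Measurable.ite (meas_eIco measurableSet_Iio) measurable_const measurable_const

lemma meas_Gc (q : ℝ) : Measurable (Gc q) :=
  Measurable.ite (meas_eIco measurableSet_Iio) measurable_const measurable_const

lemma vol_arc {U : Set T1} (hU : MeasurableSet U) {u v : ℝ} (huv : u ≤ v)
    (h1 : Set.Ioo u v ⊆ QuotientAddGroup.mk ⁻¹' U ∩ Set.Ioc 0 1)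
    (h2 : QuotientAddGroup.mk ⁻¹' U ∩ Set.Ioc 0 1 ⊆ Set.Icc u v ∪ {(1:ℝ)}) :
    volume U = ENNReal.ofReal (v - u) := by
  have hrep := AddCircle.add_projection_respects_measure (T := 1) 0 hU
  rw [zero_add] at hrep
  rw [hrep]
  apply le_antisymm
  · calc volume (QuotientAddGroup.mk ⁻¹' U ∩ Set.Ioc 0 1)
        ≤ volume (Set.Icc u v ∪ ({(1:ℝ)} : Set ℝ)) := measure_mono h2
      _ ≤ volume (Set.Icc u v) + volume ({(1:ℝ)} : Set ℝ) := measure_union_le _ _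
      _ = ENNReal.ofReal (v - u) := by
          rw [Real.volume_Icc, Real.volume_singleton, add_zero]
  · calc ENNReal.ofReal (v - u) = volume (Set.Ioo u v) := (Real.volume_Ioo).symm
      _ ≤ _ := measure_mono h1

variable {c1 c2 q : ℝ}

lemma vol_Fc0 (h0 : 0 ≤ c1) (h12 : c1 ≤ c2) (h21 : c2 ≤ 1) :
    volume {θ : T1 | Fc c1 c2 θ = 0} = ENNReal.ofReal c1 := by
  have hmeas : MeasurableSet {θ : T1 | Fc c1 c2 θ = 0} :=
    (meas_Fc c1 c2) (measurableSet_singleton _)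
  have h := vol_arc hmeas (u := 0) (v := c1) h0 ?_ ?_
  · rw [h, sub_zero]
  · rintro r ⟨hr0, hr1⟩
    have hrlt1 : r < 1 := lt_of_lt_of_le hr1 (le_trans h12 h21)
    constructor
    · show Fc c1 c2 ((r : ℝ) : T1) = 0
      rw [Fc, eIco_coe, Int.fract_eq_self.mpr ⟨le_of_lt hr0, hrlt1⟩, if_pos hr1]
    · exact ⟨hr0, le_of_lt hrlt1⟩
  · rintro r ⟨hmem, hr0, hr1⟩
    rcases eq_or_lt_of_le hr1 with h1 | h1
    · right; rw [h1]; rfl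
    · left
      have hval : Fc c1 c2 ((r : ℝ) : T1) = 0 := hmem
      rw [Fc, eIco_coe, Int.fract_eq_self.mpr ⟨le_of_lt hr0, h1⟩] at hval
      split_ifs at hval with hc hc2
      · exact ⟨le_of_lt hr0, le_of_lt hc⟩
      · exact absurd hval (by decide)
      · exact absurd hval (by decide)

lemma vol_Fc1 (h0 : 0 ≤ c1) (h12 : c1 ≤ c2) (h21 : c2 ≤ 1) :
    volume {θ : T1 | Fc c1 c2 θ = 1} = ENNReal.ofReal (c2 - c1) := by
  have hmeas : MeasurableSet {θ : T1 | Fc c1 c2 θ = 1} :=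
    (meas_Fc c1 c2) (measurableSet_singleton _)
  apply vol_arc hmeas (u := c1) (v := c2) h12
  · rintro r ⟨hr0, hr1⟩
    have hrgt0 : 0 < r := lt_of_le_of_lt h0 hr0
    have hrlt1 : r < 1 := lt_of_lt_of_le hr1 h21
    constructor
    · show Fc c1 c2 ((r : ℝ) : T1) = 1
      rw [Fc, eIco_coe, Int.fract_eq_self.mpr ⟨le_of_lt hrgt0, hrlt1⟩,
        if_neg (not_lt.mpr (le_of_lt hr0)), if_pos hr1]
    · exact ⟨hrgt0, le_of_lt hrlt1⟩
  · rintro r ⟨hmem, hr0, hr1⟩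
    rcases eq_or_lt_of_le hr1 with h1 | h1
    · right; rw [h1]; rfl
    · left
      have hval : Fc c1 c2 ((r : ℝ) : T1) = 1 := hmem
      rw [Fc, eIco_coe, Int.fract_eq_self.mpr ⟨le_of_lt hr0, h1⟩] at hval
      split_ifs at hval with hc hc2
      · exact absurd hval (by decide)
      · exact ⟨not_lt.mp hc, le_of_lt hc2⟩
      · exact absurd hval (by decide)

lemma vol_Fc2 (h0 : 0 ≤ c1) (h12 : c1 ≤ c2) (h21 : c2 ≤ 1) :
    volume {θ : T1 | Fc c1 c2 θ = 2} = ENNReal.ofReal (1 - c2) := by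
  have hmeas : MeasurableSet {θ : T1 | Fc c1 c2 θ = 2} :=
    (meas_Fc c1 c2) (measurableSet_singleton _)
  apply vol_arc hmeas (u := c2) (v := 1) h21
  · rintro r ⟨hr0, hr1⟩
    have hrgt0 : 0 < r := lt_of_le_of_lt (le_trans h0 h12) hr0
    constructor
    · show Fc c1 c2 ((r : ℝ) : T1) = 2
      rw [Fc, eIco_coe, Int.fract_eq_self.mpr ⟨le_of_lt hrgt0, hr1⟩,
        if_neg (not_lt.mpr (le_trans h12 (le_of_lt hr0))),
        if_neg (not_lt.mpr (le_of_lt hr0))]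
    · exact ⟨hrgt0, le_of_lt hr1⟩
  · rintro r ⟨hmem, hr0, hr1⟩
    rcases eq_or_lt_of_le hr1 with h1 | h1
    · right; rw [h1]; rfl
    · left
      have hval : Fc c1 c2 ((r : ℝ) : T1) = 2 := hmem
      rw [Fc, eIco_coe, Int.fract_eq_self.mpr ⟨le_of_lt hr0, h1⟩] at hval
      split_ifs at hval with hc hc2
      · exact absurd hval (by decide)
      · exact absurd hval (by decide)
      · exact ⟨not_lt.mp hc2, le_of_lt h1⟩

lemma vol_Gc0 (h0 : 0 ≤ q) (h1 : q ≤ 1) :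
    volume {ψ : T1 | Gc q ψ = 0} = ENNReal.ofReal q := by
  have hmeas : MeasurableSet {ψ : T1 | Gc q ψ = 0} :=
    (meas_Gc q) (measurableSet_singleton _)
  have h := vol_arc hmeas (u := 0) (v := q) h0 ?_ ?_
  · rw [h, sub_zero]
  · rintro r ⟨hr0, hr1⟩
    have hrlt1 : r < 1 := lt_of_lt_of_le hr1 h1
    constructor
    · show Gc q ((r : ℝ) : T1) = 0
      rw [Gc, eIco_coe, Int.fract_eq_self.mpr ⟨le_of_lt hr0, hrlt1⟩, if_pos hr1]
    · exact ⟨hr0, le_of_lt hrlt1⟩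
  · rintro r ⟨hmem, hr0, hr1⟩
    rcases eq_or_lt_of_le hr1 with he | he
    · right; rw [he]; rfl
    · left
      have hval : Gc q ((r : ℝ) : T1) = 0 := hmem
      rw [Gc, eIco_coe, Int.fract_eq_self.mpr ⟨le_of_lt hr0, he⟩] at hval
      split_ifs at hval with hc
      · exact ⟨le_of_lt hr0, le_of_lt hc⟩
      · exact absurd hval (by decide)

lemma vol_Gc1 (h0 : 0 ≤ q) (h1 : q ≤ 1) :
    volume {ψ : T1 | Gc q ψ = 1} = ENNReal.ofReal (1 - q) := by
  have hmeas : MeasurableSet {ψ : T1 | Gc q ψ = 1} :=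
    (meas_Gc q) (measurableSet_singleton _)
  apply vol_arc hmeas (u := q) (v := 1) h1
  · rintro r ⟨hr0, hr1⟩
    have hrgt0 : 0 < r := lt_of_le_of_lt h0 hr0
    constructor
    · show Gc q ((r : ℝ) : T1) = 1
      rw [Gc, eIco_coe, Int.fract_eq_self.mpr ⟨le_of_lt hrgt0, hr1⟩,
        if_neg (not_lt.mpr (le_of_lt hr0))]
    · exact ⟨hrgt0, le_of_lt hr1⟩
  · rintro r ⟨hmem, hr0, hr1⟩
    rcases eq_or_lt_of_le hr1 with he | he
    · right; rw [he]; rfl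
    · left
      have hval : Gc q ((r : ℝ) : T1) = 1 := hmem
      rw [Gc, eIco_coe, Int.fract_eq_self.mpr ⟨le_of_lt hr0, he⟩] at hval
      split_ifs at hval with hc
      · exact absurd hval (by decide)
      · exact ⟨not_lt.mp hc, le_of_lt he⟩

lemma vol_rot_set {U : Set T1} (hU : MeasurableSet U) (z : T1) :
    volume ((fun θ => θ + z) ⁻¹' U) = volume U :=
  (measurePreserving_add_right volume z).measure_preimage hU.nullMeasurableSet

end

end Arcs

section Final

noncomputable section

open MeasureTheory

lemma meas_translate (v : V) : Measurable (translate v) := by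
  apply Measurable.subtype_mk
  apply measurable_pi_lambda
  intro x
  exact measurable_toV (fun τ : Omega => τ.1 (x - v)) (fun y => y + v)
    ((measurable_pi_apply (x - v)).comp measurable_subtype_coe)

lemma wv_apply (a : Fin 3 → ℤ) (k j : Fin 3) : wv a k j = if j = k then a k else 0 := rfl

lemma wv_eq_unit {a : Fin 3 → ℤ} {k i : Fin 3} :
    wv a k = unitVec i ↔ (k = i ∧ a i = 1) := by
  constructor
  · intro h
    have hi := congrFun h i
    rw [wv_apply, unitVec, if_pos rfl] at hi
    by_cases hik : i = k
    · rw [if_pos hik] at hi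
      refine ⟨hik.symm, ?_⟩
      rw [hik]; exact hi
    · rw [if_neg hik] at hi
      exact absurd hi (by decide)
  · rintro ⟨rfl, h1⟩
    funext j
    rw [wv_apply, unitVec, h1]

lemma wv_eq_negunit {a : Fin 3 → ℤ} {k i : Fin 3} :
    wv a k = -unitVec i ↔ (k = i ∧ a i = -1) := by
  constructor
  · intro h
    have hi := congrFun h i
    rw [wv_apply] at hi
    have : (-unitVec i) i = -1 := by simp [unitVec]
    rw [this] at hi
    by_cases hik : i = k
    · rw [if_pos hik] at hi
      refine ⟨hik.symm, ?_⟩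
      rw [hik]; exact hi
    · rw [if_neg hik] at hi
      exact absurd hi (by decide)
  · rintro ⟨rfl, h1⟩
    funext j
    have : (-unitVec k) j = -(if j = k then 1 else 0) := by simp [unitVec]
    rw [wv_apply, this, h1]
    by_cases hj : j = k <;> simp [hj]

lemma neg_wv_eq_unit {a : Fin 3 → ℤ} {k i : Fin 3} :
    -(wv a k) = unitVec i ↔ (k = i ∧ a i = -1) := by
  rw [neg_eq_iff_eq_neg, wv_eq_negunit]

lemma neg_wv_eq_negunit {a : Fin 3 → ℤ} {k i : Fin 3} :
    -(wv a k) = -unitVec i ↔ (k = i ∧ a i = 1) := by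
  rw [neg_eq_iff_eq_neg, neg_neg, wv_eq_unit]

lemma ell_zero (a : Fin 3 → ℤ) : ell a (0 : V) = 0 := by simp [ell]

lemma Mmap_zero (a : Fin 3 → ℤ) (F : T1 → Fin 3) (G : T1 → ZMod 2) (θ ψ : T1) :
    Mmap a F G alS θ ψ 0 =
      if ((0 : ZMod 2) = G ψ) then wv a (F θ) else - wv a (F (θ + (-1 : ℤ) • alS)) := by
  have he : ell a (0 : V) = ell a (0 : V) := rfl
  have hp : phi a F alS θ (0 : V) = 0 := by
    rw [phi, ell_zero, Wf_zero]; simp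
  rw [Mmap, ell_zero, hp]
  have h1 : jf F alS θ 0 = F θ := by rw [jf, zero_smul, add_zero]
  have h2 : (0 : ℤ) - 1 = -1 := by ring
  rw [h1, h2]
  have h3 : ((0:ℤ) : ZMod 2) = (0 : ZMod 2) := by norm_num
  rw [h3]
  have h4 : ψ + (0:ℤ) • alS = ψ := by rw [zero_smul, add_zero]
  rw [h4]
  split_ifs with h
  · rw [zero_add]
  · rw [zero_sub]; rfl

end

end Final


section MainProof

open MeasureTheory

lemma PP_prod (A B : Set T1) : PP (A ×ˢ B) = volume A * volume B := Measure.prod_prod A B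

lemma PP_apply {s : Set (T1 × T1)} (hs : MeasurableSet s) :
    PP s = ∫⁻ θ, volume (Prod.mk θ ⁻¹' s) ∂(volume : Measure T1) := Measure.prod_apply hs

lemma coe_neg_T1 (x : ℝ) : ((-x : ℝ) : T1) = -((x : ℝ) : T1) := rfl

lemma irr2sqrt2 : Irrational (-(2 * Real.sqrt 2)) := by
  have h2 : Irrational (((2:ℤ) : ℝ) * Real.sqrt 2) :=
    irrational_sqrt_two.intCast_mul (by norm_num)
  have : ((2:ℤ) : ℝ) = (2 : ℝ) := by norm_num
  rw [this] at h2
  exact h2.neg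

lemma two_zsmul_alS : (2:ℤ) • alS = (((2 * Real.sqrt 2 : ℝ)) : T1) := by
  rw [two_zsmul]
  have : (2 * Real.sqrt 2 : ℝ) = Real.sqrt 2 + Real.sqrt 2 := by ring
  rw [this]
  rfl

end MainProof


/-- **Existence of ergodic measures of every mean current.** For every `s` in the
octahedron `O` there exists an invariant, ergodic Borel probability measure on the space of
dimer tilings of `ℤ³` with mean current `s`. -/
theorem statement6 (s : Fin 3 → ℝ) (hs : s ∈ Oct) :
    ∃ μ : Measure Omega, IsProbabilityMeasure μ ∧ IsErgodicMeasure μ ∧ meanCurrent μ = s := by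
  classical
  set t : ℝ := |s 0| + |s 1| + |s 2| with ht_def
  have ht0 : 0 ≤ t := by positivity
  have ht1 : t ≤ 1 := hs
  set a : Fin 3 → ℤ := fun i => if 0 ≤ s i then 1 else -1 with ha_def
  have ha : ∀ i, a i = 1 ∨ a i = -1 := fun i => by
    by_cases h : 0 ≤ s i
    · left; simp [ha_def, h]
    · right; simp [ha_def, h]
  have has : ∀ i, (a i : ℝ) * |s i| = s i := by
    intro i
    by_cases h : 0 ≤ s i
    · simp [ha_def, h, abs_of_nonneg h]
    · rw [ha_def]
      simp only [h, if_false]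
      rw [abs_of_neg (not_le.mp h)]
      push_cast
      ring
  have hfin : ∀ j : Fin 3, j = 0 ∨ j = 1 ∨ j = 2 := by decide
  have habs_le : ∀ i, |s i| ≤ t := by
    have h0 := abs_nonneg (s 0); have h1 := abs_nonneg (s 1); have h2 := abs_nonneg (s 2)
    intro i
    rcases hfin i with rfl | rfl | rfl <;> rw [ht_def] <;> linarith
  set lam : Fin 3 → ℝ :=
    if t = 0 then (fun i => if i = 0 then 1 else 0) else (fun i => |s i| / t) with hlam_def
  have hlam0 : ∀ i, 0 ≤ lam i := by
    intro i; rw [hlam_def]; split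
    · dsimp only
      split <;> norm_num
    · dsimp only
      positivity
  have hlam_t : ∀ i, lam i * t = |s i| := by
    intro i; rw [hlam_def]
    split
    · rename_i h
      have hsi : |s i| = 0 := le_antisymm (h ▸ habs_le i) (abs_nonneg _)
      rw [h, hsi, mul_zero]
    · rename_i h
      field_simp
  have hlam_sum : lam 0 + lam 1 + lam 2 = 1 := by
    rw [hlam_def]
    split
    · dsimp only
      rw [if_pos rfl, if_neg (by decide), if_neg (by decide)]
      norm_num
    · rename_i h
      dsimp only
      field_simp
      exact ht_def.symm
  set q : ℝ := (1 + t)/2 with hq_def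
  have hq0 : 0 ≤ q := by rw [hq_def]; linarith
  have hq1 : q ≤ 1 := by rw [hq_def]; linarith
  have hqq : q - (1 - q) = t := by rw [hq_def]; ring
  set c1 : ℝ := lam 0 with hc1_def
  set c2 : ℝ := lam 0 + lam 1 with hc2_def
  have h0c1 : 0 ≤ c1 := hlam0 0
  have hc12 : c1 ≤ c2 := by have := hlam0 1; rw [hc1_def, hc2_def]; linarith
  have hc21 : c2 ≤ 1 := by have := hlam0 2; rw [hc2_def]; linarith [hlam_sum]
  have hlam0eq : lam 0 = c1 := hc1_def.symm ▸ rfl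
  have hlam1eq : lam 1 = c2 - c1 := by rw [hc1_def, hc2_def]; ring
  have hlam2eq : lam 2 = 1 - c2 := by rw [hc2_def]; linarith [hlam_sum]
  set F : T1 → Fin 3 := Fc c1 c2 with hF_def
  set G : T1 → ZMod 2 := Gc q with hG_def
  have hF : Measurable F := meas_Fc c1 c2
  have hG : Measurable G := meas_Gc q
  set μ : Measure Omega := Measure.map (PhiM F G ha) PP with hmu_def
  have hPhi : Measurable (PhiM F G ha) := meas_PhiM F G hF hG ha
  haveI hμprob : IsProbabilityMeasure μ := Measure.isProbabilityMeasure_map hPhi.aemeasurable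
  -- invariance
  have hInv : Invariant μ := by
    intro v hv
    rw [hmu_def, Measure.map_map (meas_translate v) hPhi]
    rw [equiv_PhiM F G ha hv]
    rw [← Measure.map_map hPhi (mp_PsiM F hF v).measurable]
    rw [(mp_PsiM F hF v).map_eq]
  -- arc measures
  have harcF : ∀ i, volume {θ : T1 | F θ = i} = ENNReal.ofReal (lam i) := by
    intro i
    rcases hfin i with rfl | rfl | rfl
    · rw [hF_def, hlam0eq]; exact vol_Fc0 h0c1 hc12 hc21
    · rw [hF_def, hlam1eq]; exact vol_Fc1 h0c1 hc12 hc21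
    · rw [hF_def, hlam2eq]; exact vol_Fc2 h0c1 hc12 hc21
  have hFsetmeas : ∀ i, MeasurableSet {θ : T1 | F θ = i} := by
    intro i
    have : {θ : T1 | F θ = i} = F ⁻¹' {i} := rfl
    rw [this]; exact hF (measurableSet_singleton i)
  have harcF' : ∀ i, volume {θ : T1 | F (θ + (-1:ℤ) • alS) = i} = ENNReal.ofReal (lam i) := by
    intro i
    have heq : {θ : T1 | F (θ + (-1:ℤ) • alS) = i}
        = (fun θ : T1 => θ + (-1:ℤ) • alS) ⁻¹' {θ : T1 | F θ = i} := rfl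
    rw [heq, vol_rot_set (hFsetmeas i), harcF i]
  have harcG0 : volume {ψ : T1 | (0 : ZMod 2) = G ψ} = ENNReal.ofReal q := by
    have heq : {ψ : T1 | (0 : ZMod 2) = G ψ} = {ψ : T1 | Gc q ψ = 0} := by
      ext ψ; rw [Set.mem_setOf_eq, Set.mem_setOf_eq, hG_def, eq_comm]
    rw [heq]; exact vol_Gc0 hq0 hq1
  have harcG1 : volume {ψ : T1 | ¬ ((0 : ZMod 2) = G ψ)} = ENNReal.ofReal (1 - q) := by
    have heq : {ψ : T1 | ¬ ((0 : ZMod 2) = G ψ)} = {ψ : T1 | Gc q ψ = 1} := by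
      ext ψ
      rw [Set.mem_setOf_eq, Set.mem_setOf_eq, hG_def]
      unfold Gc
      split_ifs <;> simp
    rw [heq]; exact vol_Gc1 hq0 hq1
  -- cylinder sets are measurable
  have hev : Measurable fun τ : Omega => τ.1 0 :=
    (measurable_pi_apply (0 : V)).comp measurable_subtype_coe
  have hSmeas : ∀ y : V, MeasurableSet {τ : Omega | τ.1 0 = y} := by
    intro y
    have : {τ : Omega | τ.1 0 = y} = (fun τ : Omega => τ.1 0) ⁻¹' {y} := rfl
    rw [this]; exact hev (measurableSet_singleton y)
  -- the key cylinder computation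
  have hkey : ∀ i : Fin 3,
      μ {τ : Omega | τ.1 0 = unitVec i}
        = ENNReal.ofReal (lam i) * ENNReal.ofReal (if a i = 1 then q else 1 - q) ∧
      μ {τ : Omega | τ.1 0 = -unitVec i}
        = ENNReal.ofReal (lam i) * ENNReal.ofReal (if a i = 1 then 1 - q else q) := by
    intro i
    have hpre : ∀ y : V, μ {τ : Omega | τ.1 0 = y}
        = PP {b : T1 × T1 | Mmap a F G alS b.1 b.2 0 = y} := by
      intro y
      rw [hmu_def, Measure.map_apply hPhi (hSmeas y)]
      rfl
    rcases ha i with hai | hai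
    · have hne : ¬ (a i = -1) := by rw [hai]; decide
      constructor
      · rw [hpre]
        have hset : {b : T1 × T1 | Mmap a F G alS b.1 b.2 0 = unitVec i}
            = {θ : T1 | F θ = i} ×ˢ {ψ : T1 | (0 : ZMod 2) = G ψ} := by
          ext b
          rw [Set.mem_setOf_eq, Mmap_zero, Set.mem_prod, Set.mem_setOf_eq, Set.mem_setOf_eq]
          by_cases hb : (0 : ZMod 2) = G b.2
          · rw [if_pos hb, wv_eq_unit]
            simp [hai, hb]
          · rw [if_neg hb, neg_wv_eq_unit]
            simp [hne, hb]
        rw [hset, PP_prod, harcF i, harcG0, if_pos hai]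
      · rw [hpre]
        have hset : {b : T1 × T1 | Mmap a F G alS b.1 b.2 0 = -unitVec i}
            = {θ : T1 | F (θ + (-1:ℤ) • alS) = i} ×ˢ {ψ : T1 | ¬ ((0 : ZMod 2) = G ψ)} := by
          ext b
          rw [Set.mem_setOf_eq, Mmap_zero, Set.mem_prod, Set.mem_setOf_eq, Set.mem_setOf_eq]
          by_cases hb : (0 : ZMod 2) = G b.2
          · rw [if_pos hb, wv_eq_negunit]
            simp [hne, hb]
          · rw [if_neg hb, neg_wv_eq_negunit]
            simp [hai, hb]
        rw [hset, PP_prod, harcF' i, harcG1, if_pos hai]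
    · have hne : ¬ (a i = 1) := by rw [hai]; decide
      constructor
      · rw [hpre]
        have hset : {b : T1 × T1 | Mmap a F G alS b.1 b.2 0 = unitVec i}
            = {θ : T1 | F (θ + (-1:ℤ) • alS) = i} ×ˢ {ψ : T1 | ¬ ((0 : ZMod 2) = G ψ)} := by
          ext b
          rw [Set.mem_setOf_eq, Mmap_zero, Set.mem_prod, Set.mem_setOf_eq, Set.mem_setOf_eq]
          by_cases hb : (0 : ZMod 2) = G b.2
          · rw [if_pos hb, wv_eq_unit]
            simp [hne, hb]
          · rw [if_neg hb, neg_wv_eq_unit]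
            simp [hai, hb]
        rw [hset, PP_prod, harcF' i, harcG1, if_neg hne]
      · rw [hpre]
        have hset : {b : T1 × T1 | Mmap a F G alS b.1 b.2 0 = -unitVec i}
            = {θ : T1 | F θ = i} ×ˢ {ψ : T1 | (0 : ZMod 2) = G ψ} := by
          ext b
          rw [Set.mem_setOf_eq, Mmap_zero, Set.mem_prod, Set.mem_setOf_eq, Set.mem_setOf_eq]
          by_cases hb : (0 : ZMod 2) = G b.2
          · rw [if_pos hb, wv_eq_negunit]
            simp [hai, hb]
          · rw [if_neg hb, neg_wv_eq_negunit]
            simp [hne, hb]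
        rw [hset, PP_prod, harcF i, harcG0, if_neg hne]
  -- mean current
  have hcur : meanCurrent μ = s := by
    funext i
    obtain ⟨hk1, hk2⟩ := hkey i
    rw [meanCurrent, hk1, hk2]
    rw [ENNReal.toReal_mul, ENNReal.toReal_mul]
    rw [ENNReal.toReal_ofReal (hlam0 i)]
    rcases ha i with hai | hai
    · rw [if_pos hai, if_pos hai]
      rw [ENNReal.toReal_ofReal (by linarith), ENNReal.toReal_ofReal (by linarith)]
      have : lam i * q - lam i * (1 - q) = lam i * t := by
        rw [← hqq]; ring
      rw [this, hlam_t i]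
      have hsi : 0 ≤ s i := by
        by_contra hcon
        rw [ha_def] at hai
        simp only [hcon, if_false] at hai
        omega
      exact abs_of_nonneg hsi
    · have hne : ¬ (a i = 1) := by rw [hai]; decide
      rw [if_neg hne, if_neg hne]
      rw [ENNReal.toReal_ofReal (by linarith), ENNReal.toReal_ofReal (by linarith)]
      have : lam i * (1 - q) - lam i * q = -(lam i * t) := by
        rw [← hqq]; ring
      have hsi : s i < 0 := by
        by_contra hcon
        rw [ha_def] at hai
        simp only [not_lt.mp hcon, if_true] at hai
        omega
      rw [this, hlam_t i, abs_of_neg hsi]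
      ring
  -- ergodicity
  have hErg : ∀ A : Set Omega, MeasurableSet A →
      (∀ v : V, IsEven v → translate v ⁻¹' A = A) → μ A = 0 ∨ μ A = 1 := by
    intro A hA hAinv
    set B : Set (T1 × T1) := PhiM F G ha ⁻¹' A with hB_def
    have hB : MeasurableSet B := hPhi hA
    have hμA : μ A = PP B := by rw [hmu_def, Measure.map_apply hPhi hA]
    have hBinv : ∀ v : V, IsEven v → PsiM F a v ⁻¹' B = B := by
      intro v hv
      have h1 : translate v ∘ PhiM F G ha = PhiM F G ha ∘ PsiM F a v := equiv_PhiM F G ha hv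
      rw [hB_def, ← Set.preimage_comp, ← h1, Set.preimage_comp, hAinv v hv]
    -- the vector v⁺
    set vp : V := fun k => if k = 0 then a 0 else if k = 1 then 0 else -(a 2) with hvp_def
    have hvp0 : vp 0 = a 0 := by simp [hvp_def]
    have hvp1 : vp 1 = 0 := by simp [hvp_def]
    have hvp2 : vp 2 = -(a 2) := by simp [hvp_def]
    have hvp_even : IsEven vp := by
      unfold IsEven
      rw [hvp0, hvp1, hvp2]
      rcases ha 0 with h0 | h0 <;> rcases ha 2 with h2 | h2 <;> rw [h0, h2] <;> decide
    have hell_vp : ell a vp = 0 := by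
      rw [ell, Fin.sum_univ_three, hvp0, hvp1, hvp2]
      have h0 := a_sq ha 0
      have h2 := a_sq ha 2
      ring_nf
      linear_combination h0 - h2
    have hPsi_vp : PsiM F a vp = fun b : T1 × T1 => (b.1, b.2 - alS) := by
      funext b
      rw [PsiM, hell_vp]
      have hw : Wf a F alS b.1 (-(0:ℤ)) = 0 := by rw [neg_zero, Wf_zero]
      rw [hw]
      have : a 0 * (vp 0 + (0 : V) 0) = 1 := by
        rw [hvp0]
        have := a_sq ha 0
        simp [this]
      rw [this, zero_smul, sub_zero, one_zsmul]
    -- sections are 0 or 1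
    have hsec : ∀ θ : T1, volume (Prod.mk θ ⁻¹' B) = 0 ∨ volume (Prod.mk θ ⁻¹' B) = 1 := by
      intro θ
      have hBsec : MeasurableSet (Prod.mk θ ⁻¹' B) := hB.preimage measurable_prodMk_left
      apply ergodic_irrational_rotation irrational_sqrt_two.neg hBsec
      have hinv := hBinv vp hvp_even
      rw [hPsi_vp] at hinv
      have hptw := Set.ext_iff.mp hinv
      ext ψ
      rw [Set.mem_preimage, Set.mem_preimage, Set.mem_preimage]
      have hcoe : ((-Real.sqrt 2 : ℝ) : T1) + ψ = ψ - alS := by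
        rw [coe_neg_T1, sub_eq_neg_add]
        rfl
      rw [hcoe]
      exact hptw (θ, ψ)
    set gfun : T1 → ENNReal := fun θ => volume (Prod.mk θ ⁻¹' B) with hgfun_def
    have hgmeas : Measurable gfun := measurable_measure_prodMk_left hB
    set C : Set T1 := gfun ⁻¹' {1} with hC_def
    have hCmeas : MeasurableSet C := hgmeas (measurableSet_singleton _)
    -- the vector v₂
    set v2 : V := fun k => if k = 0 then 2 * a 0 else 0 with hv2_def
    have hv20 : v2 0 = 2 * a 0 := by simp [hv2_def]
    have hv21 : v2 1 = 0 := by simp [hv2_def]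
    have hv22 : v2 2 = 0 := by simp [hv2_def]
    have hv2_even : IsEven v2 := by
      unfold IsEven
      rw [hv20, hv21, hv22]
      rcases ha 0 with h0 | h0 <;> rw [h0] <;> decide
    have hell_v2 : ell a v2 = 2 := by
      rw [ell, Fin.sum_univ_three, hv20, hv21, hv22]
      have h0 := a_sq ha 0
      ring_nf
      linear_combination 2 * h0
    have hsece : ∀ θ : T1, gfun θ = gfun (θ - (2:ℤ) • alS) := by
      intro θ
      have hinv2 := hBinv v2 hv2_even
      have hptw := Set.ext_iff.mp hinv2
      have hseceq : Prod.mk θ ⁻¹' B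
          = (fun ψ : T1 => ψ - (a 0 * (v2 0 + Wf a F alS θ (-(ell a v2)) 0)) • alS) ⁻¹'
              (Prod.mk (θ - (ell a v2) • alS) ⁻¹' B) := by
        ext ψ
        rw [Set.mem_preimage, Set.mem_preimage, Set.mem_preimage]
        have := hptw (θ, ψ)
        rw [Set.mem_preimage] at this
        exact this.symm
      rw [hgfun_def]
      simp only []
      rw [hseceq, hell_v2]
      have hmp : MeasurePreserving (fun ψ : T1 =>
          ψ - (a 0 * (v2 0 + Wf a F alS θ (-(2:ℤ)) 0)) • alS) volume volume := by
        have : (fun ψ : T1 => ψ - (a 0 * (v2 0 + Wf a F alS θ (-(2:ℤ)) 0)) • alS)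
            = fun ψ : T1 => ψ + (-((a 0 * (v2 0 + Wf a F alS θ (-(2:ℤ)) 0)) • alS)) := by
          funext ψ; rw [sub_eq_add_neg]
        rw [this]
        exact measurePreserving_add_right volume _
      rw [hmp.measure_preimage
        ((hB.preimage measurable_prodMk_left).nullMeasurableSet)]
    have hCinv : (fun θ : T1 => ((-(2 * Real.sqrt 2) : ℝ) : T1) + θ) ⁻¹' C = C := by
      ext θ
      rw [Set.mem_preimage, hC_def, Set.mem_preimage, Set.mem_preimage,
        Set.mem_singleton_iff, Set.mem_singleton_iff]
      have hcoe : ((-(2 * Real.sqrt 2) : ℝ) : T1) + θ = θ - (2:ℤ) • alS := by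
        rw [coe_neg_T1, two_zsmul_alS, sub_eq_neg_add]
      rw [hcoe, ← hsece θ]
    have hvolC := ergodic_irrational_rotation irr2sqrt2 hCmeas hCinv
    have hPPB : PP B = volume C := by
      rw [PP_apply hB]
      have hpt : ∀ θ : T1, volume (Prod.mk θ ⁻¹' B) = C.indicator (fun _ => 1) θ := by
        intro θ
        rcases hsec θ with h | h
        · rw [h]
          symm
          apply Set.indicator_of_notMem
          intro hθ
          rw [hC_def, Set.mem_preimage, Set.mem_singleton_iff] at hθ
          rw [hgfun_def] at hθ
          simp only [] at hθ
          rw [h] at hθ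
          exact zero_ne_one hθ
        · rw [h]
          symm
          apply Set.indicator_of_mem
          rw [hC_def, Set.mem_preimage, Set.mem_singleton_iff, hgfun_def]
          exact h
      calc ∫⁻ θ, volume (Prod.mk θ ⁻¹' B) ∂(volume : Measure T1)
          = ∫⁻ θ, C.indicator (fun _ => 1) θ ∂(volume : Measure T1) := lintegral_congr hpt
        _ = volume C := by rw [lintegral_indicator hCmeas]; simp
    rw [hμA, hPPB]
    exact hvolC
  exact ⟨μ, hμprob, ⟨hInv, hErg⟩, hcur⟩

end Dimers
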